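/- arXiv:1505.06890 — 2 statements merged into one kernel-verified Lean document; each statement's English description precedes it below -/
import Mathlib

section
/- Let ν be a locally finite Borel measure on (−∞,0) satisfying the shift-domination condition with increasing rate κ: (0,∞) → (0,∞), and let H be a real separable Hilbert space. Let X, Y: ℝ → H be Borel measurable with X(θ) = Y(θ) for ν-almost every θ ∈ (−∞,0). Then for every t > 0, ∫_0^t (∫_{(−∞,0)} |X(s+θ) − Y(s+θ)|² ν(dθ)) ds ≤ ν([−t,0)) · ∫_0^t |X(s) − Y(s)|² ds. Consequently ∫_0^t ‖X_s − Y_s‖²_{𝒞ν} ds ≤ (1 + ν([−t,0))) · ∫_0^t |X(s) − Y(s)|² ds. -/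
open MeasureTheory Set
open scoped ENNReal

/-- If `ν` is a locally finite Borel measure on `(-∞,0)` satisfying the
shift-domination condition with increasing rate `κ`, `H` is a real separable Hilbert space,
and `X, Y : ℝ → H` are Borel measurable with `X = Y` ν-a.e. on `(-∞,0)`, then for every `t > 0`
`∫_0^t (∫_{(-∞,0)} |X(s+θ) - Y(s+θ)|² ν(dθ)) ds ≤ ν([-t,0)) ∫_0^t |X(s) - Y(s)|² ds`,
and consequently `∫_0^t ‖X_s - Y_s‖²_{𝒞ν} ds ≤ (1 + ν([-t,0))) ∫_0^t |X(s) - Y(s)|² ds`. -/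
theorem stmt_5 {H : Type*} [NormedAddCommGroup H] [InnerProductSpace ℝ H]
    [CompleteSpace H] [TopologicalSpace.SeparableSpace H]
    [MeasurableSpace H] [BorelSpace H]
    (ν : Measure ℝ) (hconc : ν (Ici 0) = 0)
    (hfin : ∀ t : ℝ, 0 < t → ν (Ico (-t) 0) < ∞)
    (κ : ℝ → ℝ) (hκ_pos : ∀ t, 0 < t → 0 < κ t)
    (hκ_mono : ∀ s t, 0 < s → s ≤ t → κ s ≤ κ t)
    (hshift : ∀ A : Set ℝ, MeasurableSet A → A ⊆ Iio 0 → ∀ t : ℝ, 0 < t →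
      ν ((fun a => a - t) '' A) ≤ ENNReal.ofReal (κ t) * ν A)
    (X Y : ℝ → H) (hX : Measurable X) (hY : Measurable Y)
    (hae : ∀ᵐ θ ∂(ν.restrict (Iio 0)), X θ = Y θ) :
    ∀ t : ℝ, 0 < t →
      (∫⁻ s in Ioc (0:ℝ) t, ∫⁻ θ in Iio 0, (‖X (s + θ) - Y (s + θ)‖₊ : ℝ≥0∞) ^ 2 ∂ν)
        ≤ ν (Ico (-t) 0) * ∫⁻ s in Ioc (0:ℝ) t, (‖X s - Y s‖₊ : ℝ≥0∞) ^ 2 ∧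
      (∫⁻ s in Ioc (0:ℝ) t,
          ((∫⁻ θ in Iio 0, (‖X (s + θ) - Y (s + θ)‖₊ : ℝ≥0∞) ^ 2 ∂ν)
            + (‖X s - Y s‖₊ : ℝ≥0∞) ^ 2))
        ≤ (1 + ν (Ico (-t) 0)) * ∫⁻ s in Ioc (0:ℝ) t, (‖X s - Y s‖₊ : ℝ≥0∞) ^ 2 := by
  intro t ht
  set f : ℝ → ℝ≥0∞ := fun u => (‖X u - Y u‖₊ : ℝ≥0∞) ^ 2 with hf
  have hfm : Measurable f := ((hX.sub hY).nnnorm.coe_nnreal_ennreal).pow_const 2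
  set g : ℝ → ℝ≥0∞ := (Ico (0:ℝ) t).indicator f with hg
  have hgm : Measurable g := hfm.indicator measurableSet_Ico
  -- the exceptional set
  set N : Set ℝ := Iio 0 ∩ {θ | X θ ≠ Y θ} with hN
  have hNmeas : MeasurableSet N := by
    have : MeasurableSet {θ : ℝ | X θ ≠ Y θ} := by
      have : {θ : ℝ | X θ ≠ Y θ} = (fun θ => X θ - Y θ) ⁻¹' ({0}ᶜ) := by
        ext θ; simp [sub_eq_zero]
      rw [this]
      exact (hX.sub hY) (measurableSet_singleton 0).compl
    exact measurableSet_Iio.inter this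
  have hNnull : ν N = 0 := by
    have h := (ae_restrict_iff' measurableSet_Iio).mp hae
    rw [ae_iff] at h
    convert h using 2
    ext θ
    simp only [hN, mem_inter_iff, mem_Iio, mem_setOf_eq]
    tauto
  have hNsub : N ⊆ Iio 0 := inter_subset_left
  -- key pointwise bound on the inner integral
  have key : ∀ s ∈ Ioc (0:ℝ) t,
      (∫⁻ θ in Iio 0, f (s + θ) ∂ν) ≤ ∫⁻ θ in Ico (-t) 0, g (s + θ) ∂ν := by
    intro s hs
    have hshift_null : ν ((fun a => a - s) '' N) = 0 := by
      have h := hshift N hNmeas hNsub s hs.1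
      rw [hNnull, mul_zero] at h
      exact le_antisymm h zero_le
    have hbig : ν (((fun a => a - s) '' N) ∪ Ici 0) = 0 :=
      measure_union_null hshift_null hconc
    have hae2 : ∀ᵐ θ ∂ν, (Iio 0).indicator (fun θ => f (s + θ)) θ
        ≤ (Ico (-t) 0).indicator (fun θ => g (s + θ)) θ := by
      rw [ae_iff]
      refine measure_mono_null ?_ hbig
      intro θ hθ
      simp only [mem_setOf_eq] at hθ
      by_contra hc
      rw [mem_union] at hc
      obtain ⟨him, hIci⟩ := not_or.mp hc
      apply hθ
      by_cases hθ0 : θ ∈ Iio 0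
      · rw [indicator_of_mem hθ0]
        rcases lt_or_ge (s + θ) 0 with hlt | hge
        · -- s + θ < 0 : f (s+θ) = 0 since s+θ ∉ N
          have hXY : X (s + θ) = Y (s + θ) := by
            by_contra hne
            exact him ⟨s + θ, ⟨hlt, hne⟩, by ring⟩
          simp [hf, hXY]
        · have hθmem : θ ∈ Ico (-t) 0 := by
            constructor
            · linarith [hs.2]
            · exact hθ0
          rw [indicator_of_mem hθmem]
          have : s + θ ∈ Ico (0:ℝ) t := ⟨hge, by have := hθ0; simp only [mem_Iio] at this; linarith [hs.2]⟩
          rw [hg, indicator_of_mem this]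
      · rw [indicator_of_notMem hθ0]
        exact zero_le
    calc ∫⁻ θ in Iio 0, f (s + θ) ∂ν
        = ∫⁻ θ, (Iio 0).indicator (fun θ => f (s + θ)) θ ∂ν :=
          (lintegral_indicator measurableSet_Iio _).symm
      _ ≤ ∫⁻ θ, (Ico (-t) 0).indicator (fun θ => g (s + θ)) θ ∂ν := lintegral_mono_ae hae2
      _ = ∫⁻ θ in Ico (-t) 0, g (s + θ) ∂ν := lintegral_indicator measurableSet_Ico _
  haveI : IsFiniteMeasure (ν.restrict (Ico (-t) 0)) :=
    ⟨by rw [Measure.restrict_apply_univ]; exact hfin t ht⟩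
  have hFm : Measurable (Function.uncurry fun (s θ : ℝ) => g (s + θ)) :=
    hgm.comp (measurable_fst.add measurable_snd)
  have swap : (∫⁻ s in Ioc (0:ℝ) t, ∫⁻ θ in Ico (-t) 0, g (s + θ) ∂ν)
      = ∫⁻ θ in Ico (-t) 0, (∫⁻ s in Ioc (0:ℝ) t, g (s + θ)) ∂ν :=
    lintegral_lintegral_swap hFm.aemeasurable
  have inner_le : ∀ θ : ℝ, (∫⁻ s in Ioc (0:ℝ) t, g (s + θ)) ≤ ∫⁻ u in Ioc (0:ℝ) t, f u := by
    intro θ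
    calc (∫⁻ s in Ioc (0:ℝ) t, g (s + θ)) ≤ ∫⁻ s, g (s + θ) := setLIntegral_le_lintegral _ _
      _ = ∫⁻ u, g u := lintegral_add_right_eq_self g θ
      _ = ∫⁻ u in Ico (0:ℝ) t, f u := lintegral_indicator measurableSet_Ico _
      _ = ∫⁻ u in Ioc (0:ℝ) t, f u := by rw [Measure.restrict_congr_set Ico_ae_eq_Ioc]
  have part1 : (∫⁻ s in Ioc (0:ℝ) t, ∫⁻ θ in Iio 0, f (s + θ) ∂ν)
      ≤ ν (Ico (-t) 0) * ∫⁻ s in Ioc (0:ℝ) t, f s := by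
    calc (∫⁻ s in Ioc (0:ℝ) t, ∫⁻ θ in Iio 0, f (s + θ) ∂ν)
        ≤ ∫⁻ s in Ioc (0:ℝ) t, ∫⁻ θ in Ico (-t) 0, g (s + θ) ∂ν :=
          lintegral_mono_ae ((ae_restrict_iff' measurableSet_Ioc).mpr (ae_of_all _ key))
      _ = ∫⁻ θ in Ico (-t) 0, (∫⁻ s in Ioc (0:ℝ) t, g (s + θ)) ∂ν := swap
      _ ≤ ∫⁻ _ in Ico (-t) 0, (∫⁻ u in Ioc (0:ℝ) t, f u) ∂ν :=
          lintegral_mono fun θ => inner_le θ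
      _ = ν (Ico (-t) 0) * ∫⁻ s in Ioc (0:ℝ) t, f s := by
          rw [setLIntegral_const, mul_comm]
  refine ⟨part1, ?_⟩
  rw [lintegral_add_right _ hfm, add_mul, one_mul]
  calc (∫⁻ s in Ioc (0:ℝ) t, ∫⁻ θ in Iio 0, f (s + θ) ∂ν) + ∫⁻ s in Ioc (0:ℝ) t, f s
      ≤ (ν (Ico (-t) 0) * ∫⁻ s in Ioc (0:ℝ) t, f s) + ∫⁻ s in Ioc (0:ℝ) t, f s :=
        add_le_add_left part1 _
    _ = (∫⁻ s in Ioc (0:ℝ) t, f s) + ν (Ico (-t) 0) * ∫⁻ s in Ioc (0:ℝ) t, f s := add_comm _ _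
end

section
/- (Log-Harnack inequality implies L² gradient estimate.) Let (E,d) be a metric space equipped with its Borel σ-algebra, and let (μ_ξ)_{ξ∈E} be a Markov kernel on E (each μ_ξ a Borel probability measure, with ξ ↦ μ_ξ(A) measurable for Borel A). Define P f(ξ) := ∫_E f dμ_ξ for bounded measurable f. Suppose there is C > 0 such that for every bounded measurable f with inf f > 0 and all ξ, η ∈ E: ∫ log f dμ_η ≤ log(∫ f dμ_ξ) + C·d(ξ,η)². Then for every bounded measurable f: E → ℝ and every ξ ∈ E, limsup_{η→ξ, η≠ξ} |P f(η) − P f(ξ)| / d(η,ξ) ≤ √( 2C·( P f²(ξ) − (P f(ξ))² ) ). -/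
set_option maxHeartbeats 1000000
open MeasureTheory Filter

section helpers
variable {E : Type*} [MetricSpace E] [MeasurableSpace E] [BorelSpace E]

lemma integrable_of_bdd {F : Type*} [MeasurableSpace F] {μ : Measure F} [IsFiniteMeasure μ]
    {h : F → ℝ} (hm : Measurable h) {M : ℝ} (hb : ∀ x, |h x| ≤ M) : Integrable h μ :=
  (integrable_const M).mono' hm.aestronglyMeasurable (Eventually.of_forall hb)

lemma taylor_log {x : ℝ} (hx : |x| ≤ 1/2) :
    x - x^2/2 - 2*|x|^3 ≤ Real.log (1+x) := by
  have h1 : |(-x)| < 1 := by rw [abs_neg]; linarith [abs_nonneg x]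
  have h := Real.abs_log_sub_add_sum_range_le h1 2
  simp [Finset.sum_range_succ] at h
  rw [abs_le] at h
  have h3 : (1:ℝ)/2 ≤ 1 - |x| := by linarith
  have h4 : |x|^3 / (1 - |x|) ≤ 2*|x|^3 := by
    rw [div_le_iff₀ (by linarith)]
    have h5 := pow_nonneg (abs_nonneg x) 3
    nlinarith
  nlinarith [h.1]

lemma key_est (μ : E → Measure E) (hprob : ∀ ξ, IsProbabilityMeasure (μ ξ))
    (C : ℝ)
    (hLH : ∀ f : E → ℝ, Measurable f → (∃ M, ∀ x, |f x| ≤ M) →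
      (∃ δ > 0, ∀ x, δ ≤ f x) → ∀ ξ η : E,
        (∫ x, Real.log (f x) ∂(μ η)) ≤ Real.log (∫ x, f x ∂(μ ξ)) + C * dist ξ η ^ 2)
    (h : E → ℝ) (hm : Measurable h) (K : ℝ) (hK : ∀ x, |h x| ≤ K)
    (ξ η : E) (hint0 : (∫ x, h x ∂(μ ξ)) = 0)
    (s : ℝ) (hs : 0 < s) (hsK : s * K ≤ 1/2) :
    s * ∫ x, h x ∂(μ η) ≤ C * dist ξ η ^ 2 + s^2/2 * (∫ x, (h x)^2 ∂(μ η)) + 2 * s^3 * K^3 := by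
  haveI := hprob ξ; haveI := hprob η
  set F : E → ℝ := fun y => 1 + s * h y with hF
  have hFm : Measurable F := measurable_const.add (hm.const_mul s)
  have hxb : ∀ y, |s * h y| ≤ 1/2 := fun y => by
    rw [abs_mul, abs_of_pos hs]
    calc s * |h y| ≤ s * K := by nlinarith [hK y, abs_nonneg (h y)]
    _ ≤ 1/2 := hsK
  have hFb : ∃ M, ∀ y, |F y| ≤ M := ⟨2, fun y => by
    have := hxb y; rw [abs_le] at this ⊢; constructor <;> simp [hF] <;> linarith [this.1, this.2]⟩
  have hFpos : ∃ δ > 0, ∀ y, δ ≤ F y := ⟨1/2, by norm_num, fun y => by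
    have := (abs_le.1 (hxb y)).1; simp [hF]; linarith⟩
  have hint_h : Integrable h (μ ξ) := integrable_of_bdd hm hK
  have hint_hη : Integrable h (μ η) := integrable_of_bdd hm hK
  have hint_h2η : Integrable (fun y => (h y)^2) (μ η) :=
    integrable_of_bdd (hm.pow_const 2) (M := K^2) (fun y => by
      rw [abs_pow]; exact pow_le_pow_left₀ (abs_nonneg _) (hK y) 2)
  have hFint : (∫ y, F y ∂(μ ξ)) = 1 := by
    rw [hF]
    rw [integral_add (integrable_const 1) (hint_h.const_mul s), integral_const_mul, hint0]
    simp
  have hmain := hLH F hFm hFb hFpos ξ η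
  rw [hFint, Real.log_one, zero_add] at hmain
  have hpt : ∀ y, s * h y - s^2/2 * (h y)^2 - 2*s^3*K^3 ≤ Real.log (F y) := by
    intro y
    have ht := taylor_log (hxb y)
    have habs : 2*|s * h y|^3 ≤ 2*s^3*K^3 := by
      have h1 : (s * |h y|)^3 ≤ (s * K)^3 := by
        apply pow_le_pow_left₀ (by positivity)
        nlinarith [hK y, abs_nonneg (h y)]
      rw [abs_mul, abs_of_pos hs]
      calc 2*(s * |h y|)^3 ≤ 2*(s*K)^3 := by linarith
      _ = 2*s^3*K^3 := by ring
    have : (s * h y)^2/2 = s^2/2 * (h y)^2 := by ring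
    rw [this] at ht
    linarith
  have hlogint : Integrable (fun y => Real.log (F y)) (μ η) := by
    refine integrable_of_bdd (hFm.log) (M := 1) (fun y => ?_)
    have h1 : (1:ℝ)/2 ≤ F y := by
      have := (abs_le.1 (hxb y)).1; simp [hF]; linarith
    have h2 : F y ≤ 2 := by
      have := (abs_le.1 (hxb y)).2; simp [hF]; linarith
    have hFy : (0:ℝ) < F y := lt_of_lt_of_le (by norm_num) h1
    have hl1 : Real.log (F y) ≤ Real.log 2 :=
      (Real.log_le_log_iff hFy (by norm_num)).2 h2
    have hl2 : Real.log (1/2) ≤ Real.log (F y) :=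
      (Real.log_le_log_iff (by norm_num) hFy).2 h1
    have hl : Real.log (1/2) = - Real.log 2 := by
      rw [one_div, Real.log_inv]
    rw [abs_le]
    constructor
    · rw [hl] at hl2; linarith [Real.log_two_lt_d9.le]
    · linarith [Real.log_two_lt_d9.le]
  have hAB : Integrable (fun y => s * h y - s^2/2 * (h y)^2) (μ η) :=
    (hint_hη.const_mul s).sub (hint_h2η.const_mul (s^2/2))
  have hintmono : (∫ y, (s * h y - s^2/2 * (h y)^2 - 2*s^3*K^3) ∂(μ η)) ≤
      ∫ y, Real.log (F y) ∂(μ η) := by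
    refine integral_mono ?_ hlogint (fun y => hpt y)
    exact hAB.sub (integrable_const _)
  have hcalc : (∫ y, (s * h y - s^2/2 * (h y)^2 - 2*s^3*K^3) ∂(μ η)) =
      s * (∫ y, h y ∂(μ η)) - s^2/2 * (∫ y, (h y)^2 ∂(μ η)) - 2*s^3*K^3 := by
    rw [integral_sub hAB (integrable_const _),
      integral_sub (hint_hη.const_mul s) (hint_h2η.const_mul (s^2/2)),
      integral_const_mul, integral_const_mul, integral_const]
    simp
  rw [hcalc] at hintmono
  linarith

lemma key_abs (μ : E → Measure E) (hprob : ∀ ξ, IsProbabilityMeasure (μ ξ))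
    (C : ℝ)
    (hLH : ∀ f : E → ℝ, Measurable f → (∃ M, ∀ x, |f x| ≤ M) →
      (∃ δ > 0, ∀ x, δ ≤ f x) → ∀ ξ η : E,
        (∫ x, Real.log (f x) ∂(μ η)) ≤ Real.log (∫ x, f x ∂(μ ξ)) + C * dist ξ η ^ 2)
    (h : E → ℝ) (hm : Measurable h) (K : ℝ) (hK : ∀ x, |h x| ≤ K)
    (ξ η : E) (hint0 : (∫ x, h x ∂(μ ξ)) = 0)
    (s : ℝ) (hs : 0 < s) (hsK : s * K ≤ 1/2) :
    s * |∫ x, h x ∂(μ η)| ≤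
      C * dist ξ η ^ 2 + s^2/2 * (∫ x, (h x)^2 ∂(μ η)) + 2 * s^3 * K^3 := by
  have h1 := key_est μ hprob C hLH h hm K hK ξ η hint0 s hs hsK
  have h2 := key_est μ hprob C hLH (fun y => - h y) (hm.neg) K
    (fun y => by rw [abs_neg]; exact hK y) ξ η (by rw [integral_neg, hint0, neg_zero])
    s hs hsK
  have h3 : (∫ x, (- h x)^2 ∂(μ η)) = ∫ x, (h x)^2 ∂(μ η) := by
    congr 1; funext x; ring
  have h4 : (∫ x, - h x ∂(μ η)) = - ∫ x, h x ∂(μ η) := integral_neg h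
  rw [h3, h4] at h2
  rcases abs_cases (∫ x, h x ∂(μ η)) with ⟨he, _⟩ | ⟨he, _⟩ <;> rw [he] <;> linarith

end helpers


lemma real_le_add_eps {a b : ℝ} (h : ∀ ε : ℝ, 0 < ε → a ≤ b + ε) : a ≤ b := by
  by_contra hc
  push_neg at hc
  have := h ((a - b)/2) (by linarith)
  linarith

/-- If a Markov kernel `(μ_ξ)` on a metric space `E` satisfies the
log-Harnack inequality `∫ log f dμ_η ≤ log(∫ f dμ_ξ) + C d(ξ,η)²` for all strictly positive
bounded measurable `f`, then for every bounded measurable `f` and every `ξ`,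
`limsup_{η→ξ, η≠ξ} |P f(η) − P f(ξ)|/d(η,ξ) ≤ √(2C (P f²(ξ) − (P f(ξ))²))`. -/
theorem stmt_11 {E : Type*} [MetricSpace E] [MeasurableSpace E] [BorelSpace E]
    (μ : E → Measure E) (hprob : ∀ ξ, IsProbabilityMeasure (μ ξ))
    (hmeas : ∀ A : Set E, MeasurableSet A → Measurable fun ξ => μ ξ A)
    (C : ℝ) (hC : 0 < C)
    (hLH : ∀ f : E → ℝ, Measurable f → (∃ M, ∀ x, |f x| ≤ M) →
      (∃ δ > 0, ∀ x, δ ≤ f x) → ∀ ξ η : E,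
        (∫ x, Real.log (f x) ∂(μ η)) ≤ Real.log (∫ x, f x ∂(μ ξ)) + C * dist ξ η ^ 2) :
    ∀ f : E → ℝ, Measurable f → (∃ M, ∀ x, |f x| ≤ M) → ∀ ξ : E,
      limsup (fun η => |(∫ x, f x ∂(μ η)) - (∫ x, f x ∂(μ ξ))| / dist η ξ)
          (nhdsWithin ξ {ξ}ᶜ)
        ≤ Real.sqrt (2 * C * ((∫ x, (f x) ^ 2 ∂(μ ξ)) - (∫ x, f x ∂(μ ξ)) ^ 2)) := by
  intro f hfm hfb ξ
  obtain ⟨M, hM⟩ := hfb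
  haveI := hprob ξ
  set c := ∫ x, f x ∂(μ ξ) with hcd
  clear_value c
  obtain ⟨V, hVd⟩ : ∃ V : ℝ, V = ∫ x, (f x - c)^2 ∂(μ ξ) := ⟨_, rfl⟩
  have hM0 : 0 ≤ M := le_trans (abs_nonneg _) (hM ξ)
  obtain ⟨K, hKd⟩ : ∃ K : ℝ, K = M + |c| + 1 := ⟨_, rfl⟩
  have hKpos : 0 < K := by rw [hKd]; linarith [abs_nonneg c]
  have hfc : ∀ y, |f y - c| ≤ K := fun y => by
    calc |f y - c| ≤ |f y| + |c| := abs_sub (f y) c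
    _ ≤ K := by rw [hKd]; linarith [hM y]
  have hif : Integrable f (μ ξ) := integrable_of_bdd hfm hM
  have hif2 : Integrable (fun y => (f y)^2) (μ ξ) :=
    integrable_of_bdd (hfm.pow_const 2) (M := M^2) (fun y => by
      rw [abs_pow]; exact pow_le_pow_left₀ (abs_nonneg _) (hM y) 2)
  have hV0 : (0:ℝ) ≤ V := hVd ▸ integral_nonneg fun y => sq_nonneg _
  have hVeq : (∫ x, (f x)^2 ∂(μ ξ)) - c^2 = V := by
    have he : (fun y => (f y - c)^2) = fun y => ((f y)^2 - (2*c) * f y + c^2) := by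
      funext y; ring
    have hsub : Integrable (fun y => (f y)^2 - (2*c) * f y) (μ ξ) :=
      hif2.sub (hif.const_mul (2*c))
    rw [hVd, he, integral_add hsub (integrable_const _),
      integral_sub hif2 (hif.const_mul (2*c)), integral_const_mul, integral_const]
    simp [← hcd]
    ring
  rw [hVeq]
  rcases eq_or_neBot (nhdsWithin ξ {ξ}ᶜ) with hbot | hne
  · rw [hbot, Filter.limsup_eq]
    simp only [eventually_bot, Set.setOf_true]
    rw [Real.sInf_of_not_bddBelow not_bddBelow_univ]
    positivity
  · apply real_le_add_eps
    intro ε hε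
    have hcob : IsCoboundedUnder (· ≤ ·) (nhdsWithin ξ {ξ}ᶜ)
        (fun η => |(∫ x, f x ∂(μ η)) - c| / dist η ξ) :=
      IsCoboundedUnder.of_frequently_ge (a := 0)
        ((Eventually.of_forall (fun η => div_nonneg (abs_nonneg _) dist_nonneg)).frequently)
    refine limsup_le_of_le hcob ?_
    -- constants
    obtain ⟨ρ, hρd⟩ : ∃ ρ : ℝ, ρ = ε^2/(8*C) := ⟨_, rfl⟩
    have hρ : 0 < ρ := hρd ▸ div_pos (pow_pos hε 2) (by linarith)
    obtain ⟨W, hWd⟩ : ∃ W : ℝ, W = V + ρ := ⟨_, rfl⟩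
    have hW : 0 < W := by rw [hWd]; linarith
    have hWne : W ≠ 0 := ne_of_gt hW
    obtain ⟨t', ht'd⟩ : ∃ t' : ℝ, t' = Real.sqrt (2*C/W) := ⟨_, rfl⟩
    have ht'pos : 0 < t' := ht'd ▸ Real.sqrt_pos.2 (div_pos (by linarith) hW)
    have ht'sq : t'^2 = 2*C/W := ht'd ▸ Real.sq_sqrt (le_of_lt (div_pos (by linarith) hW))
    obtain ⟨S, hSd⟩ : ∃ S : ℝ, S = Real.sqrt (2*C*W) := ⟨_, rfl⟩
    have hS0 : 0 ≤ S := hSd ▸ Real.sqrt_nonneg _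
    have hSt : S * t' = 2*C := by
      rw [hSd, ht'd, ← Real.sqrt_mul (le_of_lt (mul_pos (by linarith : (0:ℝ) < 2*C) hW)),
        show 2*C*W*(2*C/W) = (2*C)^2 by field_simp,
        Real.sqrt_sq (by linarith)]
    have ht'W : t' * W = S := by
      refine mul_left_cancel₀ (ne_of_gt ht'pos) ?_
      have h5 : t'^2*W = 2*C := by rw [ht'sq]; field_simp
      calc t'*(t'*W) = t'^2*W := by ring
      _ = 2*C := h5
      _ = S*t' := hSt.symm
      _ = t'*S := by ring
    have hopt : C/t' + t'/2*W ≤ S := by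
      have h1 : C/t' = S/2 := by
        rw [div_eq_div_iff (ne_of_gt ht'pos) (by norm_num : (2:ℝ) ≠ 0)]
        linarith [hSt]
      have h2 : t'/2*W = S/2 := by rw [show t'/2*W = (t'*W)/2 by ring, ht'W]
      linarith
    have h2CV : (0:ℝ) ≤ 2*C*V := by nlinarith
    have hsq : S ≤ Real.sqrt (2*C*V) + ε/2 := by
      have hss := Real.sq_sqrt h2CV
      have hsn := Real.sqrt_nonneg (2*C*V)
      have hρval : 2*C*ρ = ε^2/4 := by rw [hρd]; field_simp; ring
      have hle : Real.sqrt (2*C*W) ≤ Real.sqrt ((Real.sqrt (2*C*V) + ε/2)^2) := by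
        apply Real.sqrt_le_sqrt
        rw [hWd]
        nlinarith
      rw [Real.sqrt_sq (by linarith)] at hle
      rw [hSd]
      exact hle
    -- second-level constants for the variance bound
    obtain ⟨K₂, hK₂d⟩ : ∃ K₂ : ℝ, K₂ = K^2 + V + 1 := ⟨_, rfl⟩
    have hK₂1 : 1 ≤ K₂ := by rw [hK₂d]; linarith [sq_nonneg K]
    have hK₂pos : 0 < K₂ := by linarith
    have hgb : ∀ y, |(f y - c)^2 - V| ≤ K₂ := fun y => by
      have h1 : |f y - c| ≤ K := hfc y
      have h2 : (f y - c)^2 ≤ K^2 := by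
        rw [← sq_abs]; exact pow_le_pow_left₀ (abs_nonneg _) h1 2
      have h3 := sq_nonneg (f y - c)
      rw [abs_le, hK₂d]
      constructor
      · linarith [sq_nonneg K]
      · linarith
    have hD : 0 < K₂^2 + 4*K₂^3 := by
      have := pow_pos hK₂pos 2
      have := pow_pos hK₂pos 3
      linarith
    obtain ⟨s₂, hs₂d⟩ : ∃ s₂ : ℝ, s₂ = min (1/(4*K₂)) (ρ/(K₂^2 + 4*K₂^3)) := ⟨_, rfl⟩
    have hs₂pos : 0 < s₂ := hs₂d ▸
      lt_min (div_pos one_pos (by linarith)) (div_pos hρ hD)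
    have hs₂K : s₂ * K₂ ≤ 1/2 := by
      have h1 : s₂ ≤ 1/(4*K₂) := hs₂d ▸ min_le_left _ _
      calc s₂ * K₂ ≤ (1/(4*K₂)) * K₂ := mul_le_mul_of_nonneg_right h1 hK₂pos.le
      _ = 1/4 := by field_simp
      _ ≤ 1/2 := by norm_num
    have hs₂1 : s₂ ≤ 1 := by
      refine le_trans (hs₂d ▸ min_le_left _ _ : s₂ ≤ 1/(4*K₂)) ?_
      rw [div_le_one (by linarith)]
      linarith
    have hs₂ρ : s₂ * (K₂^2 + 4*K₂^3) ≤ ρ := by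
      have h1 : s₂ ≤ ρ/(K₂^2 + 4*K₂^3) := hs₂d ▸ min_le_right _ _
      rw [← le_div_iff₀ hD]
      exact h1
    -- choice of d₀
    have ht'K3 : 0 < 4*t'^2*K^3 + 1 := by
      have := mul_pos (pow_pos ht'pos 2) (pow_pos hKpos 3)
      linarith
    obtain ⟨d₀, hd₀d⟩ : ∃ d₀ : ℝ,
        d₀ = min (min (1/(4*K*t')) (Real.sqrt (ρ*s₂/(2*C)))) (ε/(4*t'^2*K^3+1)) := ⟨_, rfl⟩
    have hd₀pos : 0 < d₀ := by
      rw [hd₀d]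
      refine lt_min (lt_min ?_ ?_) ?_
      · exact div_pos one_pos (by positivity)
      · exact Real.sqrt_pos.2 (div_pos (mul_pos hρ hs₂pos) (by linarith))
      · exact div_pos hε ht'K3
    rw [eventually_nhdsWithin_iff, Metric.eventually_nhds_iff]
    refine ⟨d₀, hd₀pos, fun η hdη hη => ?_⟩
    have hηne : η ≠ ξ := hη
    haveI := hprob η
    have ht'ne : t' ≠ 0 := ne_of_gt ht'pos
    have hd0 : 0 < dist η ξ := dist_pos.2 hηne
    obtain ⟨d, hdd⟩ : ∃ d : ℝ, d = dist η ξ := ⟨_, rfl⟩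
    have hd0' : 0 < d := hdd ▸ hd0
    have hdc : dist ξ η = d := by rw [hdd, dist_comm]
    have hdlt : d < d₀ := hdd ▸ hdη
    have hd1 : d < 1/(4*K*t') :=
      lt_of_lt_of_le hdlt (hd₀d ▸ le_trans (min_le_left _ _) (min_le_left _ _))
    have hd2 : d < Real.sqrt (ρ*s₂/(2*C)) :=
      lt_of_lt_of_le hdlt (hd₀d ▸ le_trans (min_le_left _ _) (min_le_right _ _))
    have hd3 : d < ε/(4*t'^2*K^3+1) := lt_of_lt_of_le hdlt (hd₀d ▸ min_le_right _ _)
    have hd2sq : d^2 < ρ*s₂/(2*C) := (Real.lt_sqrt hd0'.le).1 hd2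
    have hd2' : C*d^2 ≤ ρ/2*s₂ := by
      have hw := (lt_div_iff₀ (by linarith : (0:ℝ) < 2*C)).1 hd2sq
      linarith only [hw]
    -- variance bound
    have hgm : Measurable (fun y => (f y - c)^2 - V) :=
      ((hfm.sub measurable_const).pow_const 2).sub measurable_const
    have hg2 : ∀ y, |(f y - c)^2| ≤ K^2 := fun y => by
      rw [abs_of_nonneg (sq_nonneg _), ← sq_abs]
      exact pow_le_pow_left₀ (abs_nonneg _) (hfc y) 2
    have hgint : Integrable (fun y => (f y - c)^2) (μ ξ) :=
      integrable_of_bdd ((hfm.sub measurable_const).pow_const 2) hg2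
    have hgintη : Integrable (fun y => (f y - c)^2) (μ η) :=
      integrable_of_bdd ((hfm.sub measurable_const).pow_const 2) hg2
    have hg0 : ∫ y, ((f y - c)^2 - V) ∂(μ ξ) = 0 := by
      rw [integral_sub hgint (integrable_const _), integral_const]
      simp [← hVd]
    have hkey2 := key_est μ hprob C hLH _ hgm K₂ hgb ξ η hg0 s₂ hs₂pos hs₂K
    rw [hdc] at hkey2
    have hii1 : ∫ y, ((f y - c)^2 - V) ∂(μ η) = (∫ y, (f y - c)^2 ∂(μ η)) - V := by
      rw [integral_sub hgintη (integrable_const _), integral_const]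
      simp
    have hptb : ∀ y, ((f y - c)^2 - V)^2 ≤ K₂^2 := fun y => by
      rw [← sq_abs]; exact pow_le_pow_left₀ (abs_nonneg _) (hgb y) 2
    have hii2 : (∫ y, ((f y - c)^2 - V)^2 ∂(μ η)) ≤ K₂^2 := by
      calc (∫ y, ((f y - c)^2 - V)^2 ∂(μ η)) ≤ ∫ _y, K₂^2 ∂(μ η) := by
            refine integral_mono ?_ (integrable_const _) hptb
            exact integrable_of_bdd (hgm.pow_const 2) (M := K₂^2) (fun y => by
              rw [abs_of_nonneg (sq_nonneg _)]; exact hptb y)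
      _ = K₂^2 := by rw [integral_const]; simp
    rw [hii1] at hkey2
    obtain ⟨Vη, hVηd⟩ : ∃ Vη : ℝ, Vη = ∫ y, (f y - c)^2 ∂(μ η) := ⟨_, rfl⟩
    rw [← hVηd] at hkey2
    have hVηle : Vη ≤ V + ρ := by
      have hb : s₂ * (Vη - V) ≤ C*d^2 + s₂^2/2 * K₂^2 + 2*s₂^3*K₂^3 := by
        have h12 := mul_le_mul_of_nonneg_left hii2 (by positivity : (0:ℝ) ≤ s₂^2/2)
        linarith only [hkey2, h12]
      have hmid : s₂*K₂^2/2 + 2*s₂^2*K₂^3 ≤ ρ/2 := by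
        have h6 := mul_le_mul_of_nonneg_right hs₂1
          (le_of_lt (mul_pos hs₂pos (pow_pos hK₂pos 3)))
        linarith only [h6, hs₂ρ]
      have hb2 : s₂*(Vη - V) ≤ s₂*ρ := by
        have hmul := mul_le_mul_of_nonneg_left hmid hs₂pos.le
        linarith only [hb, hd2', hmul]
      have := le_of_mul_le_mul_left hb2 hs₂pos
      linarith only [this]
    -- main estimate
    have hfcm : Measurable (fun y => f y - c) := hfm.sub measurable_const
    have hfc0 : ∫ y, (f y - c) ∂(μ ξ) = 0 := by
      rw [integral_sub hif (integrable_const _), integral_const]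
      simp [← hcd]
    obtain ⟨s, hsd⟩ : ∃ s : ℝ, s = t' * d := ⟨_, rfl⟩
    have hspos : 0 < s := hsd ▸ mul_pos ht'pos hd0'
    have hsK' : s * K ≤ 1/2 := by
      rw [hsd]
      have h7 : d * (4*K*t') < 1 :=
        (lt_div_iff₀ (by positivity : (0:ℝ) < 4*K*t')).1 hd1
      linarith only [h7]
    have hkey1 := key_abs μ hprob C hLH _ hfcm K hfc ξ η hfc0 s hspos hsK'
    rw [hdc] at hkey1
    have hintfη : Integrable f (μ η) := integrable_of_bdd hfm hM
    have hPη : ∫ y, (f y - c) ∂(μ η) = (∫ y, f y ∂(μ η)) - c := by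
      rw [integral_sub hintfη (integrable_const _), integral_const]
      simp
    rw [hPη, ← hVηd] at hkey1
    -- conclude
    rw [← hdd, div_le_iff₀ hd0']
    have hfin : C/t' + t'/2*(V+ρ) + 2*t'^2*K^3*d ≤ Real.sqrt (2*C*V) + ε := by
      have h8 : 2*t'^2*K^3*d ≤ ε/2 := by
        have h13 := (lt_div_iff₀ ht'K3).1 hd3
        linarith only [h13, hd0']
      have h9 : C/t' + t'/2*W ≤ S := hopt
      rw [hWd] at h9
      linarith [hsq]
    have hXb : |(∫ x, f x ∂(μ η)) - c| ≤ (C/t' + t'/2*(V+ρ) + 2*t'^2*K^3*d)*d := by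
      have h11 : s*((C/t' + t'/2*(V+ρ) + 2*t'^2*K^3*d)*d)
          = C*d^2 + s^2/2*(V+ρ) + 2*s^3*K^3 := by
        rw [hsd]; field_simp
      have h10 : s*(|(∫ x, f x ∂(μ η)) - c|) ≤ s*((C/t' + t'/2*(V+ρ) + 2*t'^2*K^3*d)*d) := by
        rw [h11]
        have h12 : s^2/2*Vη ≤ s^2/2*(V+ρ) :=
          mul_le_mul_of_nonneg_left hVηle (by positivity)
        linarith only [hkey1, h12]
      exact le_of_mul_le_mul_left h10 hspos
    calc |(∫ x, f x ∂(μ η)) - c| ≤ (C/t' + t'/2*(V+ρ) + 2*t'^2*K^3*d)*d := hXb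
    _ ≤ (Real.sqrt (2*C*V) + ε)*d := mul_le_mul_of_nonneg_right hfin hd0'.le
end
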